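/- Let G be a finite simple graph and let v be a vertex of G with degree d(v) ≥ 2. Then 2·e(G[N(v)]) ≤ λ(G)·(d(v) − 1), where e(G[N(v)]) is the number of edges of the subgraph of G induced by the neighborhood of v. -/

import Mathlib

open Matrix

/-- The adjacency matrix of a simple graph, viewed over `ℝ`, is Hermitian. -/
lemma adjHerm {V : Type*} [Fintype V] (G : SimpleGraph V) [DecidableRel G.Adj] :
    (G.adjMatrix ℝ).IsHermitian := by
  rw [Matrix.IsHermitian, Matrix.conjTranspose_eq_transpose_of_trivial]
  exact G.isSymm_adjMatrix

/-- The spectral radius of a finite simple graph: the maximum of the absolute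
values of the eigenvalues of its adjacency matrix. -/
noncomputable def specRad {V : Type*} [Fintype V] [DecidableEq V]
    (G : SimpleGraph V) [DecidableRel G.Adj] : ℝ :=
  ⨆ i, |(adjHerm G).eigenvalues i|

instance {V : Type*} (G : SimpleGraph V) [DecidableRel G.Adj] (s : Set V)
    [DecidablePred (· ∈ s)] : DecidableRel (G.induce s).Adj :=
  fun a b => ‹DecidableRel G.Adj› a b

/-- The graph `G - v` obtained from `G` by deleting the vertex `v`
and all edges incident to it. -/
abbrev deleteVertex {V : Type*} [DecidableEq V] (G : SimpleGraph V) (v : V) :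
    SimpleGraph {u // u ≠ v} :=
  G.induce {u | u ≠ v}

lemma herm_quad_le {n : Type*} [Fintype n] [DecidableEq n] {A : Matrix n n ℝ}
    (hA : A.IsHermitian) {M : ℝ} (hM : ∀ i, |hA.eigenvalues i| ≤ M) (x : n → ℝ) :
    x ⬝ᵥ A *ᵥ x ≤ M * (x ⬝ᵥ x) := by
  set U : Matrix n n ℝ := (hA.eigenvectorUnitary : Matrix n n ℝ) with hU
  have hUU : U * star U = 1 := (Matrix.mem_unitaryGroup_iff).mp hA.eigenvectorUnitary.2
  set y : n → ℝ := x ᵥ* U with hy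
  have hdiag : (diagonal (RCLike.ofReal ∘ hA.eigenvalues) : Matrix n n ℝ) =
      diagonal hA.eigenvalues := by
    congr 1
  have hstar : star U *ᵥ x = y := by
    rw [hy, ← Matrix.mulVec_transpose, ← Matrix.conjTranspose_eq_transpose_of_trivial]
    rfl
  have h1 : x ⬝ᵥ A *ᵥ x = ∑ i, y i * (hA.eigenvalues i * y i) := by
    conv_lhs => rw [hA.spectral_theorem, hdiag, Unitary.conjStarAlgAut_apply]
    rw [← Matrix.mulVec_mulVec, ← Matrix.mulVec_mulVec, hstar,
      Matrix.dotProduct_mulVec x U _, ← hy]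
    simp [dotProduct, Matrix.mulVec_diagonal]
  have h2 : x ⬝ᵥ x = ∑ i, y i * y i := by
    have h5 : x ⬝ᵥ ((U * star U) *ᵥ x) = x ⬝ᵥ x := by rw [hUU]; simp
    rw [← h5, ← Matrix.mulVec_mulVec, hstar, Matrix.dotProduct_mulVec x U y, ← hy]
    rfl
  rw [h1, h2, Finset.mul_sum]
  apply Finset.sum_le_sum
  intro i _
  have h3 : y i * (hA.eigenvalues i * y i) = hA.eigenvalues i * (y i * y i) := by ring
  rw [h3]
  have h4 : (0:ℝ) ≤ y i * y i := mul_self_nonneg _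
  exact mul_le_mul_of_nonneg_right ((le_abs_self _).trans (hM i)) h4

lemma quad_le_specRad {V : Type*} [Fintype V] [DecidableEq V]
    (G : SimpleGraph V) [DecidableRel G.Adj] (x : V → ℝ) :
    x ⬝ᵥ (G.adjMatrix ℝ) *ᵥ x ≤ specRad G * (x ⬝ᵥ x) :=
  herm_quad_le (adjHerm G)
    (fun i => le_ciSup (f := fun j => |(adjHerm G).eigenvalues j|)
      (Set.finite_range _).bddAbove i) x

/-- If `v` has degree at least `2`, then `2 e(G[N(v)]) ≤ λ(G) (d(v) - 1)`. -/
theorem edges_neighborhood_le {V : Type*} [Fintype V] [DecidableEq V]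
    (G : SimpleGraph V) [DecidableRel G.Adj] (v : V) (hv : 2 ≤ G.degree v) :
    2 * ((G.induce (G.neighborSet v)).edgeFinset.card : ℝ) ≤
      specRad G * ((G.degree v : ℝ) - 1) := by
  classical
  set S : Finset V := G.neighborFinset v with hS
  set C : Finset V := insert v S with hCdef
  have hvS : v ∉ S := G.notMem_neighborFinset_self v
  set x : V → ℝ := fun u => if u ∈ C then 1 else 0 with hxdef
  set E : ℕ := (G.induce (G.neighborSet v)).edgeFinset.card with hE
  set d : ℕ := G.degree v with hd
  -- ‖x‖²
  have hxx : x ⬝ᵥ x = (d : ℝ) + 1 := by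
    have : x ⬝ᵥ x = ∑ u, (if u ∈ C then (1:ℝ) else 0) := by
      simp only [dotProduct, hxdef]
      refine Finset.sum_congr rfl fun u _ => ?_
      by_cases h : u ∈ C <;> simp [h]
    rw [this, Finset.sum_ite_mem, Finset.univ_inter, Finset.sum_const, nsmul_eq_mul, mul_one,
      hCdef, Finset.card_insert_of_notMem hvS]
    have : S.card = d := by rw [hS, hd]; exact G.card_neighborFinset_eq_degree v
    rw [this]
    push_cast
    ring
  -- quadratic form
  have hinner : ∀ u : V, ∑ w ∈ G.neighborFinset u, x w = ((G.neighborFinset u ∩ C).card : ℝ) := by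
    intro u
    rw [hxdef]
    simp only
    rw [Finset.sum_ite_mem, Finset.sum_const, nsmul_eq_mul, mul_one]
  have hAx : x ⬝ᵥ (G.adjMatrix ℝ) *ᵥ x =
      ((∑ u ∈ C, (G.neighborFinset u ∩ C).card : ℕ) : ℝ) := by
    have h1 : x ⬝ᵥ (G.adjMatrix ℝ) *ᵥ x
        = ∑ u, x u * ∑ w ∈ G.neighborFinset u, x w := by
      simp [dotProduct, SimpleGraph.adjMatrix_mulVec_apply]
    rw [h1]
    have h2 : ∀ u, x u * ∑ w ∈ G.neighborFinset u, x w
        = if u ∈ C then ((G.neighborFinset u ∩ C).card : ℝ) else 0 := by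
      intro u
      rw [hinner u, hxdef]
      by_cases h : u ∈ C <;> simp [h]
    simp only [h2]
    rw [Finset.sum_ite_mem, Finset.univ_inter]
    push_cast
    rfl
  -- counting identity
  have hNvC : G.neighborFinset v ∩ C = S := by
    rw [hCdef, ← hS]
    exact Finset.inter_eq_left.mpr (Finset.subset_insert _ _)
  have hcount : ∑ u ∈ C, (G.neighborFinset u ∩ C).card = 2 * E + 2 * d := by
    rw [hCdef, Finset.sum_insert hvS, hNvC]
    have hScard : S.card = d := by rw [hS, hd]; exact G.card_neighborFinset_eq_degree v
    have hterm : ∀ u ∈ S, (G.neighborFinset u ∩ C).card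
        = (G.neighborFinset u ∩ S).card + 1 := by
      intro u hu
      have hadj : G.Adj u v := (G.mem_neighborFinset v u).mp hu |>.symm
      have hvN : v ∈ G.neighborFinset u := (G.mem_neighborFinset u v).mpr hadj
      have : G.neighborFinset u ∩ C = insert v (G.neighborFinset u ∩ S) := by
        ext w
        simp only [hCdef, Finset.mem_inter, Finset.mem_insert]
        constructor
        · rintro ⟨hw, hw2 | hw2⟩
          · exact Or.inl (hw2)
          · exact Or.inr ⟨hw, hw2⟩
        · rintro (rfl | ⟨hw, hw2⟩)
          · exact ⟨hvN, Or.inl rfl⟩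
          · exact ⟨hw, Or.inr hw2⟩
      rw [this, Finset.card_insert_of_notMem (fun h => hvS (Finset.mem_inter.mp h).2)]
    rw [Finset.sum_congr rfl hterm, Finset.sum_add_distrib, Finset.sum_const, smul_eq_mul,
      mul_one, hScard]
    have hdeg : ∑ u ∈ S, (G.neighborFinset u ∩ S).card = 2 * E := by
      rw [hE, ← SimpleGraph.sum_degrees_eq_twice_card_edges,
        Finset.sum_subtype (p := (· ∈ G.neighborSet v)) S (fun u => by simp [hS])
          (fun u => (G.neighborFinset u ∩ S).card)]
      refine Finset.sum_congr rfl fun a _ => ?_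
      show (G.neighborFinset ↑a ∩ S).card
          = ((G.induce (G.neighborSet v)).neighborFinset a).card
      refine (Finset.card_bij (s := (G.induce (G.neighborSet v)).neighborFinset a)
          (t := G.neighborFinset ↑a ∩ S) (fun b _ => (↑b : V)) ?_ ?_ ?_).symm
      · intro b hb
        rw [SimpleGraph.mem_neighborFinset] at hb
        have hadj : G.Adj ↑a ↑b := hb
        rw [Finset.mem_inter, SimpleGraph.mem_neighborFinset, hS]
        exact ⟨hadj, (SimpleGraph.mem_neighborFinset _ _ _).mpr b.2⟩
      · intro b1 _ b2 _ h
        exact Subtype.coe_injective h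
      · intro w hw
        rw [Finset.mem_inter, SimpleGraph.mem_neighborFinset, hS,
          SimpleGraph.mem_neighborFinset] at hw
        refine ⟨⟨w, hw.2⟩, ?_, rfl⟩
        rw [SimpleGraph.mem_neighborFinset]
        exact hw.1
    rw [hdeg]
    ring
  -- edge bound: 2E ≤ d(d-1)
  have hEbound : (2 * E : ℝ) ≤ (d : ℝ) * ((d : ℝ) - 1) := by
    have h1 : E ≤ d.choose 2 := by
      rw [hE, hd, ← G.card_neighborSet_eq_degree v]
      exact SimpleGraph.card_edgeFinset_le_card_choose_two
    have h2 : 2 * d.choose 2 ≤ d * (d - 1) := by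
      rw [Nat.choose_two_right, mul_comm]
      exact Nat.div_mul_le_self _ 2
    have h3 : (2 * E : ℕ) ≤ d * (d - 1) := le_trans (by omega) h2
    have h4 : ((d * (d - 1) : ℕ) : ℝ) = (d : ℝ) * ((d : ℝ) - 1) := by
      have : (1:ℕ) ≤ d := by omega
      push_cast [Nat.cast_sub this]
      ring
    calc (2 * E : ℝ) = ((2 * E : ℕ) : ℝ) := by push_cast; ring
      _ ≤ ((d * (d - 1) : ℕ) : ℝ) := by exact_mod_cast h3
      _ = _ := h4
  -- combine
  have hq := quad_le_specRad G x
  rw [hAx, hcount, hxx] at hq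
  have hq' : (2 * E : ℝ) + 2 * d ≤ specRad G * ((d : ℝ) + 1) := by
    calc (2 * E : ℝ) + 2 * d = ((2 * E + 2 * d : ℕ) : ℝ) := by push_cast; ring
      _ ≤ _ := hq
  have hd2 : (2 : ℝ) ≤ (d : ℝ) := by exact_mod_cast hv
  have hmul := mul_le_mul_of_nonneg_right hq' (show (0:ℝ) ≤ (d:ℝ) - 1 by linarith)
  nlinarith [hmul, hEbound, hd2]
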